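/- arXiv:1606.09113 — 3 statements merged into one kernel-verified Lean document; each statement's English description precedes it below -/
import Mathlib

section
/- For every integer d ≥ 2 and every p ∈ ℝ^d with all entries positive, min_{w ∈ W_d} G(p,w) ≤ (√3/2) · d / (d^{d/2} · d!). -/
set_option maxHeartbeats 1000000

/-- The vector `w^(j)` (0-based index `j`, representing `j+1 ∈ {1,…,d}`):
`w^(j)_i = 0` for `i < j`, `w^(j)_j = j` (1-based value, i.e. `j+1` here),
and `w^(j)_i = i − 1` (1-based, i.e. `i` here) for `i > j`. -/
def wvec (d : ℕ) (j : Fin d) : Fin d → ℕ :=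
  fun i => if i < j then 0 else if i = j then (j : ℕ) + 1 else (i : ℕ)

/-- `G(p,w) = (∏ i, p_i) / (∑ i, w_i² p_i²)^{d/2}`. -/
noncomputable def G (d : ℕ) (p : Fin d → ℝ) (w : Fin d → ℕ) : ℝ :=
  (∏ i, p i) / (Real.sqrt (∑ i, ((w i : ℝ)) ^ 2 * p i ^ 2)) ^ d

/-- `min_{w ∈ W_d} G(p,w)` where `W_d = {w^(1), …, w^(d)}`. -/
noncomputable def minG (d : ℕ) (p : Fin d → ℝ) : ℝ :=
  ⨅ j : Fin d, G d p (wvec d j)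

/-- AM–GM: `n^n ∏ z ≤ (∑ z)^n` for nonnegative `z`. -/
lemma amgm_pow (n : ℕ) (hn : 0 < n) (z : Fin n → ℝ) (hz : ∀ i, 0 ≤ z i) :
    (n : ℝ) ^ n * ∏ i, z i ≤ (∑ i, z i) ^ n := by
  have hn' : ((n : ℝ)) ≠ 0 := by positivity
  have h := Real.geom_mean_le_arith_mean_weighted Finset.univ (fun _ => (n : ℝ)⁻¹) z
    (fun i _ => by positivity)
    (by simp [Finset.card_univ, mul_comm]; field_simp)
    (fun i _ => hz i)
  have hprod : (∏ i, z i ^ ((n : ℝ)⁻¹)) ^ n = ∏ i, z i := by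
    rw [← Finset.prod_pow]
    refine Finset.prod_congr rfl fun i _ => ?_
    rw [← Real.rpow_natCast (z i ^ ((n : ℝ)⁻¹)) n, ← Real.rpow_mul (hz i),
      inv_mul_cancel₀ hn', Real.rpow_one]
  have hsum : ∑ i, (n : ℝ)⁻¹ * z i = (n : ℝ)⁻¹ * ∑ i, z i := by
    rw [Finset.mul_sum]
  have h2 : (∏ i, z i ^ ((n : ℝ)⁻¹)) ^ n ≤ ((n : ℝ)⁻¹ * ∑ i, z i) ^ n := by
    apply pow_le_pow_left₀ (Finset.prod_nonneg fun i _ => Real.rpow_nonneg (hz i) _) (hsum ▸ h)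
  rw [hprod] at h2
  calc (n : ℝ) ^ n * ∏ i, z i ≤ (n : ℝ) ^ n * ((n : ℝ)⁻¹ * ∑ i, z i) ^ n := by
        apply mul_le_mul_of_nonneg_left h2 (by positivity)
    _ = (∑ i, z i) ^ n := by
        rw [mul_pow, ← mul_assoc, ← mul_pow, mul_inv_cancel₀ hn', one_pow, one_mul]

lemma prodfac (n : ℕ) : ∏ i : Fin n, ((i : ℝ) + 2) = (n + 1).factorial := by
  induction n with
  | zero => simp
  | succ k ih =>
    rw [Fin.prod_univ_castSucc]
    simp only [Fin.coe_castSucc, Fin.val_last, ih, Nat.factorial_succ]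
    push_cast
    ring

lemma key (n : ℕ) (p : Fin (n + 2) → ℝ) (hp : ∀ i, 0 < p i) (w : Fin (n + 2) → ℕ)
    (hQ : 4 / Real.sqrt 3 * (p 0 * p 1)
        + ∑ i : Fin n, ((i : ℝ) + 2) ^ 2 * p i.succ.succ ^ 2
      ≤ ∑ i, ((w i : ℝ)) ^ 2 * p i ^ 2) :
    G (n + 2) p w
      ≤ Real.sqrt 3 / 2 * ((n : ℝ) + 2) / (Real.sqrt ((n : ℝ) + 2) ^ (n + 2) * (n + 2).factorial) := by
  have s3 : (0 : ℝ) < Real.sqrt 3 := Real.sqrt_pos.mpr (by norm_num)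
  set t : ℝ := 4 / Real.sqrt 3 * (p 0 * p 1) with ht_def
  have ht : 0 < t := by
    have := hp 0; have := hp 1
    positivity
  set S : ℝ := ∑ i : Fin n, ((i : ℝ) + 2) ^ 2 * p i.succ.succ ^ 2 with hS_def
  have hS : 0 ≤ S := Finset.sum_nonneg fun i _ => by have := hp i.succ.succ; positivity
  set Q : ℝ := ∑ i, ((w i : ℝ)) ^ 2 * p i ^ 2 with hQ_def
  set z : Fin (n + 2) → ℝ :=
    Fin.cons (t / 2) (Fin.cons (t / 2) (fun i : Fin n => ((i : ℝ) + 2) ^ 2 * p i.succ.succ ^ 2))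
    with hz_def
  have hz : ∀ i, 0 ≤ z i := by
    intro i
    induction i using Fin.cases with
    | zero => simp [hz_def]; positivity
    | succ i =>
      induction i using Fin.cases with
      | zero => simp [hz_def]; positivity
      | succ i => simp [hz_def]; have := hp i.succ.succ; positivity
  have hsum : ∑ i, z i = t + S := by
    simp only [hz_def, Fin.sum_cons]
    ring
  have hprodz : ∏ i, z i
      = (t / 2) ^ 2 * (((n + 1).factorial : ℝ) * ∏ i : Fin n, p i.succ.succ) ^ 2 := by
    simp only [hz_def, Fin.prod_cons]
    rw [show (fun i : Fin n => ((i : ℝ) + 2) ^ 2 * p i.succ.succ ^ 2)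
        = fun i : Fin n => (((i : ℝ) + 2) * p i.succ.succ) ^ 2 by funext i; ring]
    rw [Finset.prod_pow, Finset.prod_mul_distrib, prodfac]
    ring
  have hQpos : 0 < Q := lt_of_lt_of_le (by linarith) hQ
  have hamgm := amgm_pow (n + 2) (by omega) z hz
  rw [hsum, hprodz] at hamgm
  have hQd : ((n : ℝ) + 2) ^ (n + 2)
      * ((t / 2) ^ 2 * (((n + 1).factorial : ℝ) * ∏ i : Fin n, p i.succ.succ) ^ 2)
      ≤ Q ^ (n + 2) := by
    refine le_trans ?_ (pow_le_pow_left₀ (by linarith) hQ _)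
    convert hamgm using 3
    · rfl
    push_cast
    ring
  -- lower bound for (sqrt Q)^(n+2)
  set K : ℝ := t / 2 * (((n + 1).factorial : ℝ) * ∏ i : Fin n, p i.succ.succ) with hK_def
  have hK : 0 < K := by
    have hfp : 0 < ∏ i : Fin n, p i.succ.succ :=
      Finset.prod_pos fun i _ => hp i.succ.succ
    have hf : (0 : ℝ) < (n + 1).factorial := by positivity
    positivity
  have hL : Real.sqrt ((n : ℝ) + 2) ^ (n + 2) * K ≤ Real.sqrt Q ^ (n + 2) := by
    have h1 : (0 : ℝ) ≤ Real.sqrt ((n : ℝ) + 2) ^ (n + 2) * K := by positivity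
    have h2 : (0 : ℝ) ≤ Real.sqrt Q ^ (n + 2) := by positivity
    have hsq : (Real.sqrt ((n : ℝ) + 2) ^ (n + 2) * K) ^ 2 ≤ (Real.sqrt Q ^ (n + 2)) ^ 2 := by
      have e1 : (Real.sqrt ((n : ℝ) + 2) ^ (n + 2) * K) ^ 2
          = ((n : ℝ) + 2) ^ (n + 2) * K ^ 2 := by
        rw [mul_pow, ← pow_mul, mul_comm (n + 2) 2, pow_mul, Real.sq_sqrt (by positivity)]
      have e2 : (Real.sqrt Q ^ (n + 2)) ^ 2 = Q ^ (n + 2) := by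
        rw [← pow_mul, mul_comm (n + 2) 2, pow_mul, Real.sq_sqrt hQpos.le]
      rw [e1, e2]
      calc ((n : ℝ) + 2) ^ (n + 2) * K ^ 2
          = ((n : ℝ) + 2) ^ (n + 2)
            * ((t / 2) ^ 2 * (((n + 1).factorial : ℝ) * ∏ i : Fin n, p i.succ.succ) ^ 2) := by
            rw [hK_def]; ring
        _ ≤ Q ^ (n + 2) := hQd
    exact (pow_le_pow_iff_left₀ h1 h2 two_ne_zero).mp hsq
  have hsqrtQ : 0 < Real.sqrt Q ^ (n + 2) := by positivity
  have hP : 0 < ∏ i, p i := Finset.prod_pos fun i _ => hp i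
  have hGle : G (n + 2) p w ≤ (∏ i, p i) / (Real.sqrt ((n : ℝ) + 2) ^ (n + 2) * K) := by
    unfold G
    rw [← hQ_def]
    exact div_le_div_of_nonneg_left hP.le (by positivity) hL
  refine hGle.trans (le_of_eq ?_)
  have hPsplit : ∏ i, p i = p 0 * (p 1 * ∏ i : Fin n, p i.succ.succ) := by
    rw [Fin.prod_univ_succ, Fin.prod_univ_succ]
    simp [Fin.succ_zero_eq_one]
  have hfact : ((n + 2).factorial : ℝ) = ((n : ℝ) + 2) * (n + 1).factorial := by
    rw [Nat.factorial_succ]; push_cast; ring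
  rw [hPsplit, hK_def, ht_def, hfact]
  have hfp : (0 : ℝ) < ∏ i : Fin n, p i.succ.succ :=
    Finset.prod_pos fun i _ => hp i.succ.succ
  have h0 := hp 0; have h1 := hp 1
  have hsd : Real.sqrt ((n : ℝ) + 2) ^ (n + 2) ≠ 0 := by positivity
  have hfpn : ∏ i : Fin n, p i.succ.succ ≠ 0 := ne_of_gt hfp
  have hfn : ((n + 1).factorial : ℝ) ≠ 0 := by positivity
  have h0n : p 0 ≠ 0 := ne_of_gt h0
  have h1n : p 1 ≠ 0 := ne_of_gt h1
  have hs3 : Real.sqrt 3 ≠ 0 := ne_of_gt s3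
  field_simp
  ring

lemma wvec_succ_succ (n : ℕ) (j : Fin (n + 2)) (i : Fin n) (hj : (j : ℕ) ≤ 1) :
    (wvec (n + 2) j i.succ.succ : ℕ) = (i : ℕ) + 2 := by
  unfold wvec
  rw [if_neg, if_neg]
  · simp [Fin.val_succ]
  · rw [Fin.ext_iff]; simp [Fin.val_succ]; omega
  · rw [Fin.lt_def]; simp [Fin.val_succ]; omega

/-- For every `d ≥ 2` and positive `p ∈ ℝ^d`,
`min_{w ∈ W_d} G(p,w) ≤ (√3/2)·d/(d^{d/2}·d!)`. -/
theorem stmt0 (d : ℕ) (hd : 2 ≤ d) (p : Fin d → ℝ) (hp : ∀ i, 0 < p i) :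
    minG d p ≤ Real.sqrt 3 / 2 * d / (Real.sqrt d ^ d * Nat.factorial d) := by
  obtain ⟨n, rfl⟩ : ∃ n, d = n + 2 := ⟨d - 2, by omega⟩
  have s3 : (0 : ℝ) < Real.sqrt 3 := Real.sqrt_pos.mpr (by norm_num)
  have h3 : Real.sqrt 3 ^ 2 = 3 := Real.sq_sqrt (by norm_num)
  have hmin : ∀ j : Fin (n + 2), minG (n + 2) p ≤ G (n + 2) p (wvec (n + 2) j) := by
    intro j
    exact ciInf_le (Set.Finite.bddBelow (Set.finite_range _)) j
  have hcast : ((n + 2 : ℕ) : ℝ) = (n : ℝ) + 2 := by push_cast; ring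
  by_cases hc : p 0 ≤ Real.sqrt 3 * p 1
  · refine (hmin 1).trans ?_
    have := key n p hp (wvec (n + 2) 1) ?_
    · rw [hcast]; exact this
    · rw [Fin.sum_univ_succ, Fin.sum_univ_succ]
      have e0 : (wvec (n + 2) 1 0 : ℕ) = 0 := by
        unfold wvec
        rw [if_pos]
        rw [Fin.lt_def, Fin.val_zero, Fin.val_one]
        omega
      have e1 : (wvec (n + 2) 1 (Fin.succ 0) : ℕ) = 2 := by
        unfold wvec
        rw [Fin.succ_zero_eq_one, if_neg (lt_irrefl _), if_pos rfl, Fin.val_one]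
      have es : ∀ i : Fin n, ((wvec (n + 2) 1 i.succ.succ : ℕ) : ℝ) = (i : ℝ) + 2 := by
        intro i
        rw [wvec_succ_succ n 1 i (by rw [Fin.val_one])]
        push_cast; ring
      rw [e0, e1]
      have hsum_eq : ∑ i : Fin n, ((wvec (n + 2) 1 i.succ.succ : ℕ) : ℝ) ^ 2 * p i.succ.succ ^ 2
          = ∑ i : Fin n, ((i : ℝ) + 2) ^ 2 * p i.succ.succ ^ 2 :=
        Finset.sum_congr rfl fun i _ => by rw [es i]
      rw [hsum_eq]
      push_cast
      have ht : 4 / Real.sqrt 3 * (p 0 * p 1) ≤ 2 ^ 2 * p 1 ^ 2 := by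
        rw [div_mul_eq_mul_div, div_le_iff₀ s3]
        have := mul_le_mul_of_nonneg_right hc (hp 1).le
        nlinarith [this]
      rw [Fin.succ_zero_eq_one]
      nlinarith [ht]
  · push_neg at hc
    refine (hmin 0).trans ?_
    have := key n p hp (wvec (n + 2) 0) ?_
    · rw [hcast]; exact this
    · rw [Fin.sum_univ_succ, Fin.sum_univ_succ]
      have e0 : (wvec (n + 2) 0 0 : ℕ) = 1 := by
        unfold wvec
        rw [if_neg (lt_irrefl _), if_pos rfl, Fin.val_zero]
      have e1 : (wvec (n + 2) 0 (Fin.succ 0) : ℕ) = 1 := by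
        unfold wvec
        rw [Fin.succ_zero_eq_one, if_neg, if_neg]
        · rw [Fin.val_one]
        · rw [Fin.ext_iff, Fin.val_zero, Fin.val_one]; omega
        · rw [Fin.lt_def, Fin.val_zero, Fin.val_one]; omega
      have es : ∀ i : Fin n, ((wvec (n + 2) 0 i.succ.succ : ℕ) : ℝ) = (i : ℝ) + 2 := by
        intro i
        rw [wvec_succ_succ n 0 i (by rw [Fin.val_zero]; omega)]
        push_cast; ring
      rw [e0, e1]
      have hsum_eq : ∑ i : Fin n, ((wvec (n + 2) 0 i.succ.succ : ℕ) : ℝ) ^ 2 * p i.succ.succ ^ 2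
          = ∑ i : Fin n, ((i : ℝ) + 2) ^ 2 * p i.succ.succ ^ 2 :=
        Finset.sum_congr rfl fun i _ => by rw [es i]
      rw [hsum_eq]
      push_cast
      have ht : 4 / Real.sqrt 3 * (p 0 * p 1) ≤ 1 ^ 2 * p 0 ^ 2 + 1 ^ 2 * p 1 ^ 2 := by
        rw [div_mul_eq_mul_div, div_le_iff₀ s3]
        have hf1 : 0 ≤ p 0 - Real.sqrt 3 * p 1 := by linarith
        have h3p : Real.sqrt 3 * (Real.sqrt 3 * p 1) = 3 * p 1 := by
          rw [← mul_assoc, ← sq, h3]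
        have hm := mul_le_mul_of_nonneg_left hc.le s3.le
        have hf2 : 0 ≤ Real.sqrt 3 * p 0 - p 1 := by
          rw [h3p] at hm
          linarith [hp 1]
        have hexp : Real.sqrt 3 * (p 0 ^ 2 + p 1 ^ 2) - 4 * (p 0 * p 1)
            = (p 0 - Real.sqrt 3 * p 1) * (Real.sqrt 3 * p 0 - p 1) := by
          linear_combination (p 0 * p 1) * h3
        nlinarith [mul_nonneg hf1 hf2, hexp]
      rw [Fin.succ_zero_eq_one]
      nlinarith [ht]
end

section
/- For the vector p* ∈ ℝ^d defined by p*_1 = 1, p*_2 = 1/√3, p*_j = √(2/3)/(j−1) for 3 ≤ j ≤ d, one has min_{w ∈ W_d} G(p*,w) = (√3/2) · d / (d^{d/2} · d!), and this minimum is attained at w^(1), i.e. it equals (∏_{i=1}^d p*_i)/D_1(p*)^d. -/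
noncomputable def D (d : ℕ) (j : Fin d) (p : Fin d → ℝ) : ℝ :=
  Real.sqrt (∑ i, ((wvec d j i : ℝ)) ^ 2 * p i ^ 2)

/-- `p*`: `p*_1 = 1`, `p*_2 = 1/√3`, `p*_j = √(2/3)/(j−1)` for `3 ≤ j ≤ d`
(0-based: index `i` has 1-based position `i+1`, so the denominator `j−1` is `i`). -/
noncomputable def pstar (d : ℕ) : Fin d → ℝ :=
  fun i => if (i : ℕ) = 0 then 1 else if (i : ℕ) = 1 then 1 / Real.sqrt 3
    else Real.sqrt (2 / 3) / ((i : ℕ) : ℝ)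

open Finset

/-- the summand of `D` as a function on `ℕ`. -/
noncomputable def gfun (jn : ℕ) : ℕ → ℝ := fun i =>
  (if i < jn then (0:ℝ) else if i = jn then (jn:ℝ) + 1 else (i:ℝ)) ^ 2 *
  (if i = 0 then (1:ℝ) else if i = 1 then 1 / Real.sqrt 3 else Real.sqrt (2/3) / (i:ℝ)) ^ 2

lemma sqrt23_sq : Real.sqrt (2/3) ^ 2 = (2:ℝ)/3 := Real.sq_sqrt (by norm_num)

lemma sqrt3_sq : Real.sqrt 3 ^ 2 = (3:ℝ) := Real.sq_sqrt (by norm_num)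

lemma pstar_pos {d : ℕ} (i : Fin d) : 0 < pstar d i := by
  unfold pstar
  split_ifs with h1 h2
  · norm_num
  · positivity
  · apply div_pos (Real.sqrt_pos.2 (by norm_num))
    have : 0 < (i:ℕ) := by omega
    exact_mod_cast this

lemma S_eq (d : ℕ) (j : Fin d) :
    (∑ i, ((wvec d j i : ℝ)) ^ 2 * pstar d i ^ 2) = ∑ i ∈ range d, gfun j.val i := by
  rw [← Fin.sum_univ_eq_sum_range (gfun j.val) d]
  apply Finset.sum_congr rfl
  intro i _
  unfold gfun wvec pstar
  simp only [Fin.lt_def, ← Fin.val_eq_val]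
  split_ifs <;> push_cast <;> ring

lemma tail_sum (d a jn : ℕ) (h2 : 2 ≤ a) (hj : jn < a) :
    ∑ i ∈ Finset.Ico a d, gfun jn i = ((d - a : ℕ) : ℝ) * (2/3) := by
  rw [Finset.sum_congr rfl (g := fun _ => (2:ℝ)/3) (fun i hi => ?_)]
  · rw [Finset.sum_const, Nat.card_Ico, nsmul_eq_mul]
  · obtain ⟨hi1, _⟩ := Finset.mem_Ico.mp hi
    unfold gfun
    rw [if_neg (by omega), if_neg (by omega), if_neg (by omega), if_neg (by omega)]
    rw [div_pow, sqrt23_sq]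
    have hi0 : ((i:ℝ)) ≠ 0 := by
      have : i ≠ 0 := by omega
      exact_mod_cast this
    field_simp

lemma S0 (d : ℕ) (hd : 2 ≤ d) (j : Fin d) (hj : j.val ≤ 1) :
    (∑ i, ((wvec d j i : ℝ)) ^ 2 * pstar d i ^ 2) = 2 * d / 3 := by
  rw [S_eq, range_eq_Ico, Finset.sum_eq_sum_Ico_succ_bot (by omega) _,
    Finset.sum_eq_sum_Ico_succ_bot (by omega) _, tail_sum d 2 j.val (by omega) (by omega)]
  have hc : ((d - 2 : ℕ) : ℝ) = (d : ℝ) - 2 := by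
    push_cast [Nat.cast_sub hd]; ring
  interval_cases h : j.val <;>
  · unfold gfun
    norm_num [hc]
    linarith

lemma S_le (d : ℕ) (hd : 2 ≤ d) (j : Fin d) :
    (∑ i, ((wvec d j i : ℝ)) ^ 2 * pstar d i ^ 2) ≤ 2 * d / 3 := by
  rcases le_or_gt j.val 1 with h | h
  · exact le_of_eq (S0 d hd j h)
  · rw [S_eq, range_eq_Ico, ← Finset.sum_Ico_consecutive _ (Nat.zero_le j.val) (le_of_lt j.isLt),
      Finset.sum_eq_sum_Ico_succ_bot j.isLt, tail_sum d (j.val + 1) j.val (by omega) (by omega)]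
    have hz : ∑ i ∈ Finset.Ico 0 j.val, gfun j.val i = 0 := by
      apply Finset.sum_eq_zero
      intro i hi
      obtain ⟨_, hi2⟩ := Finset.mem_Ico.mp hi
      unfold gfun
      rw [if_pos hi2]
      ring
    rw [hz, zero_add]
    have hgj : gfun j.val j.val = ((j.val:ℝ) + 1)^2 * ((2/3) / (j.val:ℝ)^2) := by
      unfold gfun
      rw [if_neg (by omega), if_pos rfl, if_neg (by omega), if_neg (by omega), div_pow, sqrt23_sq]
    rw [hgj]
    have hc : ((d - (j.val + 1) : ℕ) : ℝ) = (d : ℝ) - (j.val : ℝ) - 1 := by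
      have : j.val + 1 ≤ d := j.isLt
      push_cast [Nat.cast_sub this]; ring
    rw [hc]
    set x : ℝ := (j.val : ℝ) with hx
    have hx2 : (2:ℝ) ≤ x := by
      rw [hx]; exact_mod_cast h
    have hxpos : (0:ℝ) < x^2 := by nlinarith
    have key : (x + 1)^2 * ((2/3) / x^2) ≤ (2/3) * (x + 1) := by
      rw [show (x + 1)^2 * ((2/3) / x^2) = (x + 1)^2 * (2/3) / x^2 by ring,
        div_le_iff₀ hxpos]
      nlinarith
    linarith

noncomputable def pfun : ℕ → ℝ := fun i =>
  if i = 0 then (1:ℝ) else if i = 1 then 1 / Real.sqrt 3 else Real.sqrt (2/3) / (i:ℝ)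

lemma P_eq (d : ℕ) (hd : 2 ≤ d) :
    ∏ i : Fin d, pstar d i
      = (1 / Real.sqrt 3) * (Real.sqrt (2/3) ^ (d-2) / (Nat.factorial (d-1) : ℝ)) := by
  have h1 : ∏ i : Fin d, pstar d i = ∏ i ∈ range d, pfun i := by
    rw [← Fin.prod_univ_eq_prod_range pfun d]
    exact Finset.prod_congr rfl (fun i _ => rfl)
  have h2 : ∏ i ∈ Finset.Ico 2 d, pfun i
      = Real.sqrt (2/3) ^ (d-2) / (Nat.factorial (d-1) : ℝ) := by
    have h3 : ∏ i ∈ Finset.Ico 2 d, pfun i = ∏ i ∈ Finset.Ico 2 d, Real.sqrt (2/3) / (i:ℝ) := by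
      apply Finset.prod_congr rfl
      intro i hi
      obtain ⟨hi1, _⟩ := Finset.mem_Ico.mp hi
      unfold pfun
      rw [if_neg (by omega), if_neg (by omega)]
    have h4 : ∏ i ∈ Finset.Ico 2 d, (i:ℝ) = (Nat.factorial (d-1) : ℝ) := by
      have h5 : ∏ i ∈ Finset.Ico 1 d, i = Nat.factorial (d-1) := by
        conv_lhs => rw [show d = (d-1)+1 by omega]
        exact Finset.prod_Ico_id_eq_factorial (d-1)
      rw [Finset.prod_eq_prod_Ico_succ_bot (by omega : 1 < d), one_mul] at h5
      rw [← Nat.cast_prod, h5]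
    rw [h3, Finset.prod_div_distrib, Finset.prod_const, Nat.card_Ico, h4]
  rw [h1, range_eq_Ico, Finset.prod_eq_prod_Ico_succ_bot (by omega : 0 < d),
    Finset.prod_eq_prod_Ico_succ_bot (by omega : 1 < d), h2]
  norm_num [pfun]

lemma S_pos (d : ℕ) (hd : 2 ≤ d) (j : Fin d) :
    0 < ∑ i, ((wvec d j i : ℝ)) ^ 2 * pstar d i ^ 2 := by
  apply Finset.sum_pos'
  · intro i _
    positivity
  · refine ⟨j, Finset.mem_univ j, ?_⟩
    have hw : wvec d j j = (j:ℕ) + 1 := by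
      unfold wvec
      rw [if_neg (lt_irrefl j), if_pos rfl]
    rw [hw]
    have := pstar_pos j
    positivity

/-- `min_{w ∈ W_d} G(p*,w) = (√3/2)·d/(d^{d/2}·d!)`, attained at `w^(1)`. -/
theorem stmt1 (d : ℕ) (hd : 2 ≤ d) :
    minG d (pstar d) = Real.sqrt 3 / 2 * d / (Real.sqrt d ^ d * Nat.factorial d) ∧
      minG d (pstar d) = G d (pstar d) (wvec d ⟨0, by omega⟩) := by
  have hdpos : 0 < d := by omega
  set j0 : Fin d := ⟨0, by omega⟩ with hj0
  have hP : 0 < ∏ i, pstar d i := Finset.prod_pos (fun i _ => pstar_pos i)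
  haveI : Nonempty (Fin d) := ⟨j0⟩
  have hmin : minG d (pstar d) = G d (pstar d) (wvec d j0) := by
    apply le_antisymm
    · exact ciInf_le (Finite.bddBelow_range _) j0
    · apply le_ciInf
      intro j
      unfold G
      have h1 : Real.sqrt (∑ i, ((wvec d j i : ℝ)) ^ 2 * pstar d i ^ 2)
          ≤ Real.sqrt (∑ i, ((wvec d j0 i : ℝ)) ^ 2 * pstar d i ^ 2) := by
        apply Real.sqrt_le_sqrt
        rw [S0 d hd j0 (by simp [hj0])]
        exact S_le d hd j
      have h2 : 0 < Real.sqrt (∑ i, ((wvec d j i : ℝ)) ^ 2 * pstar d i ^ 2) :=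
        Real.sqrt_pos.2 (S_pos d hd j)
      gcongr
  refine ⟨?_, hmin⟩
  rw [hmin]
  clear hmin
  obtain ⟨e, rfl⟩ : ∃ e, d = e + 2 := ⟨d - 2, by omega⟩
  unfold G
  rw [S0 (e+2) (by omega) j0 (by simp [hj0]), P_eq (e+2) (by omega)]
  have hc1 : (2 : ℝ) * ((e+2 : ℕ) : ℝ) / 3 = (2/3) * ((e+2 : ℕ) : ℝ) := by ring
  rw [hc1, Real.sqrt_mul (by norm_num : (0:ℝ) ≤ 2/3), mul_pow]
  set s := Real.sqrt (2/3) with hs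
  set t := Real.sqrt ((e+2 : ℕ) : ℝ) with ht
  set r := Real.sqrt 3 with hr
  have hrpos : 0 < r := Real.sqrt_pos.2 (by norm_num)
  have hspos : 0 < s := Real.sqrt_pos.2 (by norm_num)
  have htpos : 0 < t := Real.sqrt_pos.2 (by positivity)
  have hs2 : s ^ 2 = 2/3 := sqrt23_sq
  have hr3 : (1:ℝ) / r = r / 3 := by
    rw [div_eq_div_iff (ne_of_gt hrpos) (by norm_num), one_mul, ← sq, sqrt3_sq]
  have hse : s ^ (e + 2) = s ^ e * (2/3) := by
    rw [pow_add, hs2]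
  have hfact : (Nat.factorial (e+2) : ℝ) = ((e:ℝ) + 2) * (Nat.factorial (e+1) : ℝ) := by
    rw [Nat.factorial_succ]
    push_cast
    ring
  have he1 : e + 2 - 2 = e := by omega
  have he2 : e + 2 - 1 = e + 1 := by omega
  rw [he1, he2, hse, hr3, hfact]
  have hf1 : (Nat.factorial (e+1) : ℝ) ≠ 0 := by
    exact_mod_cast Nat.factorial_ne_zero (e+1)
  have hte : t ^ (e+2) ≠ 0 := by positivity
  have hsen : s ^ e ≠ 0 := by positivity
  push_cast
  field_simp
end

section
/- W_d ⊆ Ŵ_d, and for every w ∈ Ŵ_d there exists w' ∈ W_d with w_i ≤ w'_i for all i ∈ {1,...,d}; consequently, for every p ∈ ℝ^d with all entries positive, min_{w ∈ Ŵ_d} G(p,w) = min_{w ∈ W_d} G(p,w). -/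
/-- `Ŵ_d`: vectors with some pivot `k` where `w_k = k` (1-based), zeros before,
and `1 ≤ w_j ≤ j−1` (1-based) after. -/
def What (d : ℕ) : Set (Fin d → ℕ) :=
  {w | ∃ k : Fin d, w k = (k : ℕ) + 1 ∧ (∀ i : Fin d, i < k → w i = 0) ∧
    ∀ j : Fin d, k < j → 1 ≤ w j ∧ w j ≤ (j : ℕ)}

lemma G_anti (d : ℕ) (p : Fin d → ℝ) (hp : ∀ i, 0 < p i) (w w' : Fin d → ℕ)
    (hw : ∃ i, 0 < w i) (hle : ∀ i, w i ≤ w' i) : G d p w' ≤ G d p w := by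
  obtain ⟨i0, hi0⟩ := hw
  have hS : 0 < ∑ i, ((w i : ℝ)) ^ 2 * p i ^ 2 := by
    apply Finset.sum_pos' (fun i _ => by positivity)
    refine ⟨i0, Finset.mem_univ _, ?_⟩
    have : (0 : ℝ) < (w i0 : ℝ) := by exact_mod_cast hi0
    have := hp i0
    positivity
  have hSle : (∑ i, ((w i : ℝ)) ^ 2 * p i ^ 2) ≤ ∑ i, ((w' i : ℝ)) ^ 2 * p i ^ 2 := by
    apply Finset.sum_le_sum
    intro i _
    have h1 : ((w i : ℝ)) ^ 2 ≤ ((w' i : ℝ)) ^ 2 := by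
      have : ((w i : ℝ)) ≤ ((w' i : ℝ)) := by exact_mod_cast hle i
      have h0 : (0 : ℝ) ≤ (w i : ℝ) := by positivity
      nlinarith
    nlinarith [sq_nonneg (p i)]
  have hsq : 0 < Real.sqrt (∑ i, ((w i : ℝ)) ^ 2 * p i ^ 2) := Real.sqrt_pos.mpr hS
  have hprod : 0 ≤ ∏ i, p i := le_of_lt (Finset.prod_pos fun i _ => hp i)
  unfold G
  gcongr

/-- `W_d ⊆ Ŵ_d`, every element of `Ŵ_d` is dominated componentwise by an element
of `W_d`, and consequently `min_{w ∈ Ŵ_d} G(p,w) = min_{w ∈ W_d} G(p,w)` for every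
positive `p`. -/
theorem stmt12 (d : ℕ) (hd : 2 ≤ d) :
    (∀ j : Fin d, wvec d j ∈ What d) ∧
      (∀ w ∈ What d, ∃ j : Fin d, ∀ i : Fin d, w i ≤ wvec d j i) ∧
      ∀ p : Fin d → ℝ, (∀ i, 0 < p i) →
        (⨅ w : What d, G d p w.1) = minG d p := by
  have hdn : Nonempty (Fin d) := ⟨⟨0, by omega⟩⟩
  have h1 : ∀ j : Fin d, wvec d j ∈ What d := by
    intro j
    refine ⟨j, ?_, ?_, ?_⟩
    · simp [wvec]
    · intro i hi; simp [wvec, hi]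
    · intro i hi
      have hne : i ≠ j := ne_of_gt hi
      have hnlt : ¬ i < j := not_lt_of_gt hi
      have : 1 ≤ (i : ℕ) := by
        have : (j : ℕ) < (i : ℕ) := hi
        omega
      simp [wvec, hnlt, hne, this]
  have h2 : ∀ w ∈ What d, ∃ j : Fin d, ∀ i : Fin d, w i ≤ wvec d j i := by
    rintro w ⟨k, hk, hlt, hgt⟩
    refine ⟨k, fun i => ?_⟩
    rcases lt_trichotomy i k with h | h | h
    · simp [hlt i h]
    · subst h; simp [wvec, hk]
    · have hne : i ≠ k := ne_of_gt h
      have hnlt : ¬ i < k := not_lt_of_gt h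
      simp only [wvec, if_neg hnlt, if_neg hne]
      exact (hgt i h).2
  refine ⟨h1, h2, ?_⟩
  intro p hp
  have hpos : ∀ w ∈ What d, ∃ i, 0 < w i := by
    rintro w ⟨k, hk, -, -⟩
    exact ⟨k, by omega⟩
  have key : ∀ w ∈ What d, minG d p ≤ G d p w := by
    intro w hw
    obtain ⟨j, hj⟩ := h2 w hw
    have hG : G d p (wvec d j) ≤ G d p w := G_anti d p hp w _ (hpos w hw) hj
    exact le_trans (ciInf_le (Finite.bddBelow_range _) j) hG
  have hne : Nonempty (What d) := ⟨⟨wvec d ⟨0, by omega⟩, h1 _⟩⟩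
  have hbdd : BddBelow (Set.range fun w : What d => G d p w.1) := by
    refine ⟨minG d p, ?_⟩
    rintro x ⟨w, rfl⟩
    exact key w.1 w.2
  apply le_antisymm
  · apply le_ciInf
    intro j
    exact ciInf_le hbdd ⟨wvec d j, h1 j⟩
  · exact le_ciInf fun w => key w.1 w.2
end
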